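/- Operator inequality controlling the no-Hamiltonian scheme operator: let Q be a positive semidefinite Hermitian d×d complex matrix and Δt ≥ 0; set S = I + (Δt²/4)Q² and let S^{−1/2} be the inverse of its positive definite square root. Then, in the Loewner order, 0 ≤ exp(−(Δt/2)Q) − (I − (Δt/2)Q)·S^{−1/2} ≤ (Δt²/4)·Q². -/

import Mathlib

open Matrix
open scoped ComplexOrder

section conjlemmas

variable {d : ℕ} {Q : Matrix (Fin d) (Fin d) ℂ} (hQ : Q.IsHermitian)

noncomputable def conjD (hQ : Q.IsHermitian) (v : Fin d → ℝ) : Matrix (Fin d) (Fin d) ℂ :=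
  (hQ.eigenvectorUnitary : Matrix (Fin d) (Fin d) ℂ) * diagonal (Complex.ofReal ∘ v) *
    star (hQ.eigenvectorUnitary : Matrix (Fin d) (Fin d) ℂ)

lemma unit_mul : (hQ.eigenvectorUnitary : Matrix (Fin d) (Fin d) ℂ) *
    star (hQ.eigenvectorUnitary : Matrix (Fin d) (Fin d) ℂ) = 1 :=
  Matrix.mem_unitaryGroup_iff.mp hQ.eigenvectorUnitary.2

lemma mul_unit : star (hQ.eigenvectorUnitary : Matrix (Fin d) (Fin d) ℂ) *
    (hQ.eigenvectorUnitary : Matrix (Fin d) (Fin d) ℂ) = 1 :=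
  Matrix.mem_unitaryGroup_iff'.mp hQ.eigenvectorUnitary.2

lemma conjD_mul (v w : Fin d → ℝ) : conjD hQ v * conjD hQ w = conjD hQ (v * w) := by
  unfold conjD
  rw [show ∀ (A B C D E F : Matrix (Fin d) (Fin d) ℂ), A * B * C * (D * E * F)
      = A * B * (C * D) * E * F from fun A B C D E F => by noncomm_ring,
    mul_unit hQ, mul_one, mul_assoc _ (diagonal _) (diagonal _), diagonal_mul_diagonal,
    show (fun i => (Complex.ofReal ∘ v) i * (Complex.ofReal ∘ w) i) = Complex.ofReal ∘ (v * w)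
      from funext fun i => by simp]

lemma conjD_one : conjD hQ 1 = 1 := by
  unfold conjD
  have : diagonal (Complex.ofReal ∘ (1 : Fin d → ℝ)) = 1 := by
    rw [show Complex.ofReal ∘ (1 : Fin d → ℝ) = 1 from funext fun i => by simp]
    exact diagonal_one
  rw [this, mul_one, unit_mul hQ]

lemma conjD_add (v w : Fin d → ℝ) : conjD hQ v + conjD hQ w = conjD hQ (v + w) := by
  unfold conjD
  have h1 : (diagonal (Complex.ofReal ∘ v)) + (diagonal (Complex.ofReal ∘ w))
      = diagonal (Complex.ofReal ∘ (v + w)) := by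
    rw [diagonal_add, show (fun i => (Complex.ofReal ∘ v) i + (Complex.ofReal ∘ w) i)
      = Complex.ofReal ∘ (v + w) from funext fun i => by simp]
  rw [← h1]
  noncomm_ring

lemma conjD_smul (r : ℝ) (v : Fin d → ℝ) : (r : ℂ) • conjD hQ v = conjD hQ (r • v) := by
  unfold conjD
  rw [show Complex.ofReal ∘ (r • v) = (r : ℂ) • (Complex.ofReal ∘ v) from
      funext fun i => by simp, diagonal_smul, mul_smul_comm, smul_mul_assoc]

lemma conjD_sub (v w : Fin d → ℝ) : conjD hQ v - conjD hQ w = conjD hQ (v - w) := by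
  have : v - w = v + (-1 : ℝ) • w := by funext i; simp [sub_eq_add_neg]
  rw [this, ← conjD_add, ← conjD_smul]
  push_cast
  rw [neg_one_smul, sub_eq_add_neg]

lemma conjD_posSemidef {v : Fin d → ℝ} (hv : ∀ i, 0 ≤ v i) : (conjD hQ v).PosSemidef := by
  unfold conjD
  rw [Matrix.star_eq_conjTranspose]
  apply Matrix.PosSemidef.mul_mul_conjTranspose_same
  refine posSemidef_diagonal_iff.mpr fun i => ?_
  simp only [Function.comp_apply]
  exact_mod_cast hv i

lemma conjD_exp (v : Fin d → ℝ) :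
    NormedSpace.exp (conjD hQ v) = conjD hQ (fun i => Real.exp (v i)) := by
  unfold conjD
  have hUinv : (hQ.eigenvectorUnitary : Matrix (Fin d) (Fin d) ℂ)⁻¹ =
      star (hQ.eigenvectorUnitary : Matrix (Fin d) (Fin d) ℂ) :=
    inv_eq_left_inv (mul_unit hQ)
  have hu : IsUnit (hQ.eigenvectorUnitary : Matrix (Fin d) (Fin d) ℂ) :=
    isUnit_iff_exists.mpr ⟨_, unit_mul hQ, mul_unit hQ⟩
  rw [← hUinv, Matrix.exp_conj _ _ hu, Matrix.exp_diagonal,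
    show NormedSpace.exp (Complex.ofReal ∘ v) = Complex.ofReal ∘ (fun i => Real.exp (v i)) by
      rw [Pi.exp_def]
      funext i
      simp [← Complex.exp_eq_exp_ℂ, ← Complex.ofReal_exp]]

lemma conjD_inv {v : Fin d → ℝ} (hv : ∀ i, v i ≠ 0) :
    (conjD hQ v)⁻¹ = conjD hQ (fun i => (v i)⁻¹) := by
  apply inv_eq_right_inv
  rw [conjD_mul]
  rw [show v * (fun i => (v i)⁻¹) = 1 by funext i; simp [mul_inv_cancel₀ (hv i)]]
  exact conjD_one hQ

lemma conjD_self : Q = conjD hQ hQ.eigenvalues := hQ.spectral_theorem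

open scoped MatrixOrder in
lemma conjD_sqrt {v : Fin d → ℝ} (hv : ∀ i, 0 ≤ v i) (hS : (conjD hQ v).PosSemidef) :
    CFC.sqrt (conjD hQ v) = conjD hQ (fun i => Real.sqrt (v i)) := by
  apply CFC.sqrt_unique (hb := (conjD_posSemidef hQ fun i => Real.sqrt_nonneg _).nonneg)
  rw [conjD_mul, show (fun i => Real.sqrt (v i)) * (fun i => Real.sqrt (v i)) = v from
    funext fun i => Real.mul_self_sqrt (hv i)]

end conjlemmas
/-- The positive semidefinite square root of a matrix (defined to be `0` if the matrix is not
positive semidefinite). -/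
noncomputable def matSqrt {d : ℕ} (A : Matrix (Fin d) (Fin d) ℂ) : Matrix (Fin d) (Fin d) ℂ :=
  open scoped Classical in
  open scoped MatrixOrder in
  if h : A.PosSemidef then CFC.sqrt A else 0

lemma scalar_key {t : ℝ} (ht : 0 ≤ t) :
    0 ≤ Real.exp (-t) - (1 - t) * (Real.sqrt (1 + t ^ 2))⁻¹ ∧
    Real.exp (-t) - (1 - t) * (Real.sqrt (1 + t ^ 2))⁻¹ ≤ t ^ 2 := by
  set s := Real.sqrt (1 + t ^ 2) with hsdef
  have hs1 : (1 : ℝ) ≤ s := by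
    rw [hsdef]
    exact (Real.le_sqrt' one_pos).mpr (by nlinarith)
  have hspos : (0 : ℝ) < s := lt_of_lt_of_le one_pos hs1
  have hssq : s ^ 2 = 1 + t ^ 2 := Real.sq_sqrt (by positivity)
  have hsinv_pos : (0:ℝ) < s⁻¹ := by positivity
  constructor
  · rw [sub_nonneg]
    rcases le_or_gt (1 - t) 0 with h | h
    · exact le_trans (mul_nonpos_of_nonpos_of_nonneg h hsinv_pos.le) (Real.exp_pos _).le
    · calc (1 - t) * s⁻¹ ≤ (1 - t) * 1 := by
            apply mul_le_mul_of_nonneg_left _ h.le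
            rw [inv_le_one_iff₀]; right; exact hs1
        _ = 1 - t := mul_one _
        _ ≤ Real.exp (-t) := by
            have := Real.add_one_le_exp (-t); linarith
  · rw [sub_le_iff_le_add]
    rcases le_or_gt t 1 with h | h
    · -- 0 ≤ t ≤ 1
      have e1 : Real.exp (-t) ≤ (1 + t + t ^ 2 / 2)⁻¹ := by
        rw [Real.exp_neg]
        exact inv_anti₀ (by positivity) (Real.quadratic_le_exp_of_nonneg ht)
      have hmul : (1 - t ^ 2 / 2) * s ≤ 1 := by
        have ht2 : t ^ 2 ≤ 1 := by nlinarith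
        have hsq : ((1 - t ^ 2 / 2) * s) ^ 2 ≤ 1 := by
          have h2 : ((1 - t ^ 2 / 2) * s) ^ 2 = (1 - t ^ 2 / 2) ^ 2 * (1 + t ^ 2) := by
            rw [mul_pow, hssq]
          rw [h2]
          nlinarith [ht2, sq_nonneg t, sq_nonneg (t ^ 2),
            mul_nonneg (by linarith : (0:ℝ) ≤ 1 - t ^ 2) (sq_nonneg (t ^ 2))]
        nlinarith [sq_nonneg ((1 - t ^ 2 / 2) * s - 1)]
      have e2 : (1 - t) * (1 - t ^ 2 / 2) ≤ (1 - t) * s⁻¹ := by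
        apply mul_le_mul_of_nonneg_left _ (by linarith)
        rw [inv_eq_one_div, le_div_iff₀ hspos]; exact hmul
      have e3 : (1 + t + t ^ 2 / 2)⁻¹ ≤ (1 - t) * (1 - t ^ 2 / 2) + t ^ 2 := by
        rw [inv_eq_one_div, div_le_iff₀ (by positivity : (0:ℝ) < 1 + t + t ^ 2 / 2)]
        nlinarith [ht, h, mul_nonneg ht (sq_nonneg t), sq_nonneg (t ^ 2),
          mul_nonneg ht (sq_nonneg (t ^ 2))]
      linarith
    · -- t > 1
      have hts : t ≤ s := by
        rw [hsdef]
        exact Real.le_sqrt' (by linarith) |>.mpr (by nlinarith)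
      have e1 : Real.exp (-t) ≤ t⁻¹ := by
        rw [Real.exp_neg]
        calc (Real.exp t)⁻¹ ≤ (1 + t)⁻¹ :=
              inv_anti₀ (by linarith) (by have := Real.add_one_le_exp t; linarith)
          _ ≤ t⁻¹ := inv_anti₀ (by linarith) (by linarith)
      have e2 : (1 - t) * t⁻¹ ≤ (1 - t) * s⁻¹ := by
        apply mul_le_mul_of_nonpos_left _ (by linarith)
        exact inv_anti₀ (by linarith) hts
      have e3 : (1 - t) * t⁻¹ = t⁻¹ - 1 := by
        field_simp
      have : Real.exp (-t) ≤ 1 + (1 - t) * s⁻¹ := by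
        calc Real.exp (-t) ≤ t⁻¹ := e1
          _ = 1 + ((1 - t) * t⁻¹) := by rw [e3]; ring
          _ ≤ 1 + (1 - t) * s⁻¹ := by linarith
      nlinarith [this, h]


/-- Operator inequality controlling the no-Hamiltonian scheme operator: for `Q` positive
semidefinite, `S = I + (Δt²/4)Q²`, in the Loewner order
`0 ≤ exp(−(Δt/2)Q) − (I − (Δt/2)Q) S^{−1/2} ≤ (Δt²/4) Q²`. -/
theorem stmt12 {d : ℕ} (Q : Matrix (Fin d) (Fin d) ℂ) (hQ : Q.PosSemidef)
    (Δt : ℝ) (hΔt : 0 ≤ Δt) :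
    (NormedSpace.exp ((-(Δt / 2 : ℝ) : ℂ) • Q)
      - (1 - ((Δt / 2 : ℝ) : ℂ) • Q) *
          (matSqrt (1 + ((Δt ^ 2 / 4 : ℝ) : ℂ) • Q ^ 2))⁻¹).PosSemidef
    ∧ (((Δt ^ 2 / 4 : ℝ) : ℂ) • Q ^ 2
        - (NormedSpace.exp ((-(Δt / 2 : ℝ) : ℂ) • Q)
            - (1 - ((Δt / 2 : ℝ) : ℂ) • Q) *
                (matSqrt (1 + ((Δt ^ 2 / 4 : ℝ) : ℂ) • Q ^ 2))⁻¹)).PosSemidef := by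
  have hH : Q.IsHermitian := hQ.1
  set lam := hH.eigenvalues with hlam
  have hlam0 : ∀ i, 0 ≤ lam i := fun i => hQ.eigenvalues_nonneg i
  have hQrep : Q = conjD hH lam := conjD_self hH
  have hQ2 : Q ^ 2 = conjD hH (fun i => lam i ^ 2) := by
    rw [pow_two]
    conv_lhs => rw [hQrep]
    rw [conjD_mul]
    exact congrArg _ (funext fun i => (pow_two (lam i)).symm)
  have hcQ2 : ((Δt ^ 2 / 4 : ℝ) : ℂ) • Q ^ 2
      = conjD hH (fun i => Δt ^ 2 / 4 * lam i ^ 2) := by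
    rw [hQ2, conjD_smul]
    exact congrArg _ (funext fun i => by simp)
  have hSrep : (1 : Matrix (Fin d) (Fin d) ℂ) + ((Δt ^ 2 / 4 : ℝ) : ℂ) • Q ^ 2
      = conjD hH (fun i => 1 + Δt ^ 2 / 4 * lam i ^ 2) := by
    rw [hcQ2, ← conjD_one hH, conjD_add]
    exact congrArg _ (funext fun i => by simp)
  have hs0 : ∀ i, (0:ℝ) ≤ 1 + Δt ^ 2 / 4 * lam i ^ 2 := fun i => by positivity
  have hsq : matSqrt (1 + ((Δt ^ 2 / 4 : ℝ) : ℂ) • Q ^ 2)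
      = conjD hH (fun i => Real.sqrt (1 + Δt ^ 2 / 4 * lam i ^ 2)) := by
    have hS' : (conjD hH (fun i => 1 + Δt ^ 2 / 4 * lam i ^ 2)).PosSemidef :=
      conjD_posSemidef hH hs0
    rw [matSqrt, hSrep, dif_pos hS']
    exact conjD_sqrt hH hs0 hS'
  have hsqrtpos : ∀ i, (0:ℝ) < Real.sqrt (1 + Δt ^ 2 / 4 * lam i ^ 2) := fun i =>
    Real.sqrt_pos.mpr (by positivity)
  have hinv : (conjD hH (fun i => Real.sqrt (1 + Δt ^ 2 / 4 * lam i ^ 2)))⁻¹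
      = conjD hH (fun i => (Real.sqrt (1 + Δt ^ 2 / 4 * lam i ^ 2))⁻¹) :=
    conjD_inv hH fun i => (hsqrtpos i).ne'
  have hexp : NormedSpace.exp ((-(Δt / 2 : ℝ) : ℂ) • Q)
      = conjD hH (fun i => Real.exp (-(Δt / 2) * lam i)) := by
    conv_lhs => rw [hQrep]
    rw [← Complex.ofReal_neg, conjD_smul, conjD_exp]
    exact congrArg _ (funext fun i => by simp)
  have hlin : (1 : Matrix (Fin d) (Fin d) ℂ) - ((Δt / 2 : ℝ) : ℂ) • Q
      = conjD hH (fun i => 1 - Δt / 2 * lam i) := by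
    conv_lhs => rw [hQrep]
    rw [conjD_smul, ← conjD_one hH, conjD_sub]
    exact congrArg _ (funext fun i => by simp)
  have hmain : NormedSpace.exp ((-(Δt / 2 : ℝ) : ℂ) • Q)
      - (1 - ((Δt / 2 : ℝ) : ℂ) • Q) *
          (matSqrt (1 + ((Δt ^ 2 / 4 : ℝ) : ℂ) • Q ^ 2))⁻¹
      = conjD hH (fun i => Real.exp (-(Δt / 2) * lam i)
          - (1 - Δt / 2 * lam i) * (Real.sqrt (1 + Δt ^ 2 / 4 * lam i ^ 2))⁻¹) := by
    rw [hexp, hlin, hsq, hinv, conjD_mul, conjD_sub]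
    exact congrArg _ (funext fun i => rfl)
  have hkey : ∀ i, 0 ≤ Real.exp (-(Δt / 2) * lam i)
      - (1 - Δt / 2 * lam i) * (Real.sqrt (1 + Δt ^ 2 / 4 * lam i ^ 2))⁻¹
      ∧ Real.exp (-(Δt / 2) * lam i)
        - (1 - Δt / 2 * lam i) * (Real.sqrt (1 + Δt ^ 2 / 4 * lam i ^ 2))⁻¹
        ≤ Δt ^ 2 / 4 * lam i ^ 2 := by
    intro i
    have ht : 0 ≤ Δt / 2 * lam i := mul_nonneg (by linarith) (hlam0 i)
    have h1 : (1 : ℝ) + Δt ^ 2 / 4 * lam i ^ 2 = 1 + (Δt / 2 * lam i) ^ 2 := by ring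
    have h2 : -(Δt / 2) * lam i = -(Δt / 2 * lam i) := by ring
    have h3 : Δt ^ 2 / 4 * lam i ^ 2 = (Δt / 2 * lam i) ^ 2 := by ring
    rw [h1, h2, h3]
    exact scalar_key ht
  constructor
  · rw [hmain]
    exact conjD_posSemidef hH fun i => (hkey i).1
  · rw [hmain, hcQ2, conjD_sub]
    exact conjD_posSemidef hH fun i => sub_nonneg.mpr (hkey i).2
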